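/- Let T be a tree on n vertices with a DFS contour walk Γ of length 2n − 3 (the contour with one edge removed). Then one can choose n positions on Γ whose images are exactly the n distinct vertices of T, such that any two consecutive chosen positions along Γ are at distance at most 3 on Γ. -/

import Mathlib

set_option linter.unusedSectionVars false

namespace ContourSel

open SimpleGraph Walk

variable {V : Type*} [DecidableEq V] {G : SimpleGraph V}

section Tree

variable (hconn : G.Connected) (r : V)
include hconn

/-- a fixed shortest path from `r` to `z`. -/
noncomputable def pth (z : V) : G.Walk r z :=
  ((hconn r z).exists_walk_length_eq_dist).choose

lemma pth_length (z : V) : (pth hconn r z).length = G.dist r z :=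
  ((hconn r z).exists_walk_length_eq_dist).choose_spec

lemma pth_isPath (z : V) : (pth hconn r z).IsPath :=
  Walk.isPath_of_length_eq_dist _ (pth_length hconn r z)

lemma path_eq_pth (hac : G.IsAcyclic) {z : V} (q : G.Walk r z) (hq : q.IsPath) :
    q = pth hconn r z := by
  have := hac.path_unique ⟨q, hq⟩ ⟨pth hconn r z, pth_isPath hconn r z⟩
  exact congrArg Subtype.val this

lemma mem_pth_dist {z x : V} (hx : x ∈ (pth hconn r z).support) :
    G.dist r x + G.dist x z = G.dist r z := by
  have h1 : G.dist r x ≤ ((pth hconn r z).takeUntil x hx).length := SimpleGraph.dist_le _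
  have h2 : G.dist x z ≤ ((pth hconn r z).dropUntil x hx).length := SimpleGraph.dist_le _
  have h3 := congrArg Walk.length ((pth hconn r z).take_spec hx)
  rw [Walk.length_append, pth_length] at h3
  have h4 := hconn.dist_triangle (u := r) (v := x) (w := z)
  omega

lemma dist_adj_ne (hac : G.IsAcyclic) {x y : V} (hxy : G.Adj x y) :
    G.dist r x ≠ G.dist r y := by
  intro h
  by_cases hy : y ∈ (pth hconn r x).support
  · have h1 := mem_pth_dist hconn r hy
    have h2 : G.dist y x = 1 := (SimpleGraph.dist_eq_one_iff_adj).2 hxy.symm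
    omega
  · have hq : ((pth hconn r x).concat hxy).IsPath := by
      rw [Walk.isPath_def, Walk.support_concat, List.nodup_append]
      simp [(pth_isPath hconn r x).support_nodup, hy]
      exact fun a ha hay => hy (hay ▸ ha)
    have := path_eq_pth hconn r hac _ hq
    have hlen := congrArg Walk.length this
    rw [Walk.length_concat, pth_length, pth_length] at hlen
    omega

lemma dist_adj_cases (hac : G.IsAcyclic) {x y : V} (hxy : G.Adj x y) :
    G.dist r y = G.dist r x + 1 ∨ G.dist r x = G.dist r y + 1 := by
  have h1 : G.dist r y ≤ G.dist r x + 1 := by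
    have := hconn.dist_triangle (u := r) (v := x) (w := y)
    have : G.dist x y = 1 := (SimpleGraph.dist_eq_one_iff_adj).2 hxy
    omega
  have h2 : G.dist r x ≤ G.dist r y + 1 := by
    have := hconn.dist_triangle (u := r) (v := y) (w := x)
    have : G.dist y x = 1 := (SimpleGraph.dist_eq_one_iff_adj).2 hxy.symm
    omega
  have := dist_adj_ne hconn r hac hxy
  omega

/-- uniqueness of the parent. -/
lemma parent_unique (hac : G.IsAcyclic) {x y y' : V} (hy : G.Adj y x) (hy' : G.Adj y' x)
    (h : G.dist r y + 1 = G.dist r x) (h' : G.dist r y' + 1 = G.dist r x) : y = y' := by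
  have key : ∀ (z : V) (hz : G.Adj z x), G.dist r z + 1 = G.dist r x →
      ∃ hp : x ∉ (pth hconn r z).support, True := by
    intro z hz hdz
    refine ⟨fun hmem => ?_, trivial⟩
    have := mem_pth_dist hconn r hmem
    omega
  obtain ⟨hx1, -⟩ := key y hy h
  obtain ⟨hx2, -⟩ := key y' hy' h'
  have hq1 : ((pth hconn r y).concat hy).IsPath := by
    rw [Walk.isPath_def, Walk.support_concat, ← List.concat_eq_append]
    exact List.Nodup.concat hx1 (pth_isPath hconn r y).support_nodup
  have hq2 : ((pth hconn r y').concat hy').IsPath := by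
    rw [Walk.isPath_def, Walk.support_concat, ← List.concat_eq_append]
    exact List.Nodup.concat hx2 (pth_isPath hconn r y').support_nodup
  have e1 := path_eq_pth hconn r hac _ hq1
  have e2 := path_eq_pth hconn r hac _ hq2
  have := Walk.concat_inj (e1.trans e2.symm)
  exact this.1

/-- the cut lemma: the only edge from outside the subtree of `x` into it is the
parent edge. -/
lemma cut (hac : G.IsAcyclic) {x p z w' : V} (hadj : G.Adj p x)
    (hp : G.dist r p + 1 = G.dist r x) (hzw : G.Adj z w')
    (hw : x ∈ (pth hconn r w').support) (hz : x ∉ (pth hconn r z).support) :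
    z = p ∧ w' = x := by
  by_cases hmem : w' ∈ (pth hconn r z).support
  · exfalso
    have ht : ((pth hconn r z).takeUntil w' hmem).IsPath :=
      (pth_isPath hconn r z).takeUntil hmem
    have := path_eq_pth hconn r hac _ ht
    have hsub := (pth hconn r z).support_takeUntil_subset hmem
    rw [this] at hsub
    exact hz (hsub hw)
  · have hq : ((pth hconn r z).concat hzw).IsPath := by
      rw [Walk.isPath_def, Walk.support_concat, ← List.concat_eq_append]
      exact List.Nodup.concat hmem (pth_isPath hconn r z).support_nodup
    have e := path_eq_pth hconn r hac _ hq
    have hx : x = w' := by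
      rw [← e, Walk.support_concat] at hw
      simp only [List.concat_eq_append, List.mem_append, List.mem_singleton] at hw
      exact hw.resolve_left hz
    subst hx
    refine ⟨?_, rfl⟩
    have hlen := congrArg Walk.length e
    rw [Walk.length_concat, pth_length, pth_length] at hlen
    exact parent_unique hconn r hac hzw hadj (by omega) hp

/-- crossing lemma along a walk, indexed version. -/
lemma crossing (hac : G.IsAcyclic) {a b : V} (q : G.Walk a b) {x p : V} (hadj : G.Adj p x)
    (hp : G.dist r p + 1 = G.dist r x) :
    ∀ α β : ℕ, α ≤ β → β ≤ q.length →
      x ∉ (pth hconn r (q.getVert α)).support →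
      x ∈ (pth hconn r (q.getVert β)).support →
      ∃ s, α ≤ s ∧ s < β ∧ q.getVert s = p ∧ q.getVert (s + 1) = x := by
  intro α β hab hbl
  induction' hd : β - α with k ih generalizing α
  · intro ha hb
    have : α = β := by omega
    subst this
    exact absurd hb ha
  · intro ha hb
    have hαβ : α < β := by omega
    have hadj' : G.Adj (q.getVert α) (q.getVert (α + 1)) :=
      q.adj_getVert_succ (by omega)
    by_cases hc : x ∈ (pth hconn r (q.getVert (α + 1))).support
    · obtain ⟨h1, h2⟩ := cut hconn r hac hadj hp hadj' hc ha
      exact ⟨α, le_refl _, hαβ, h1, h2⟩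
    · obtain ⟨s, hs1, hs2, hs3⟩ := ih (α + 1) (by omega) (by omega) hc hb
      exact ⟨s, by omega, hs2, hs3⟩

end Tree

section Walklemmas

variable (hconn : G.Connected) (hac : G.IsAcyclic)

lemma darts_toProd {a b : V} (q : G.Walk a b) :
    ∀ (i : ℕ) (h : i < q.length),
      (q.darts.get ⟨i, by simpa using h⟩).toProd = (q.getVert i, q.getVert (i + 1)) := by
  induction q with
  | nil => intro i h; simp at h
  | cons h q ih =>
    intro i hi
    cases i with
    | zero => simp [Walk.getVert_cons_succ]
    | succ i =>
      have := ih i (by simpa using hi)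
      simpa [Walk.getVert_cons_succ] using this

lemma no_repeat {a b : V} (q : G.Walk a b) (hd : q.darts.Nodup) {s t : ℕ}
    (hs : s < q.length) (ht : t < q.length) (hne : s ≠ t)
    (h1 : q.getVert s = q.getVert t) (h2 : q.getVert (s + 1) = q.getVert (t + 1)) :
    False := by
  have e1 := darts_toProd q s hs
  have e2 := darts_toProd q t ht
  have hget : q.darts.get ⟨s, by simpa using hs⟩ = q.darts.get ⟨t, by simpa using ht⟩ :=
    SimpleGraph.Dart.toProd_injective (by rw [e1, e2, h1, h2])
  have := (List.nodup_iff_injective_get.mp hd) hget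
  exact hne (by simpa using congrArg Fin.val this)

include hconn hac in
/-- a non-last occurrence departs to a child -/
lemma F2 {a b : V} (q : G.Walk a b) (hd : q.darts.Nodup) {k m : ℕ}
    (hk : k < m) (hm : m ≤ q.length) (hocc : q.getVert m = q.getVert k)
    (hup : G.dist a (q.getVert (k + 1)) + 1 = G.dist a (q.getVert k)) : False := by
  have hadj : G.Adj (q.getVert (k + 1)) (q.getVert k) :=
    (q.adj_getVert_succ (by omega)).symm
  have hxa : q.getVert k ∉ (pth hconn a (q.getVert 0)).support := by
    intro hmem
    have h1 := mem_pth_dist hconn a hmem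
    rw [Walk.getVert_zero] at h1
    have : G.dist a a = 0 := SimpleGraph.dist_self
    omega
  have hxp : q.getVert k ∉ (pth hconn a (q.getVert (k + 1))).support := by
    intro hmem
    have h1 := mem_pth_dist hconn a hmem
    omega
  have hxk : q.getVert k ∈ (pth hconn a (q.getVert k)).support := Walk.end_mem_support _
  have hxm : q.getVert k ∈ (pth hconn a (q.getVert m)).support := by
    rw [hocc]; exact Walk.end_mem_support _
  obtain ⟨s1, -, hs1k, hp1, hx1⟩ :=
    crossing hconn a hac q hadj hup 0 k (by omega) (by omega) hxa hxk
  obtain ⟨s2, hs2k, hs2m, hp2, hx2⟩ :=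
    crossing hconn a hac q hadj hup (k + 1) m (by omega) hm hxp hxm
  exact no_repeat q hd (show s1 < q.length by omega) (show s2 < q.length by omega)
    (by omega) (hp1.trans hp2.symm) (hx1.trans hx2.symm)

include hconn hac in
/-- a non-first occurrence arrives from a child -/
lemma F1 {a b : V} (q : G.Walk a b) (hd : q.darts.Nodup) {j k : ℕ}
    (hj : j < k) (hk : k ≤ q.length) (hocc : q.getVert j = q.getVert k)
    (hdn : G.dist a (q.getVert (k - 1)) + 1 = G.dist a (q.getVert k)) : False := by
  have ek : k - 1 + 1 = k := by omega
  have hadj : G.Adj (q.getVert (k - 1)) (q.getVert k) := by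
    have := q.adj_getVert_succ (i := k - 1) (by omega)
    rwa [ek] at this
  have hxa : q.getVert k ∉ (pth hconn a (q.getVert 0)).support := by
    intro hmem
    have h1 := mem_pth_dist hconn a hmem
    rw [Walk.getVert_zero] at h1
    have : G.dist a a = 0 := SimpleGraph.dist_self
    omega
  have hxj : q.getVert k ∈ (pth hconn a (q.getVert j)).support := by
    rw [hocc]; exact Walk.end_mem_support _
  obtain ⟨s1, -, hs1j, hp1, hx1⟩ :=
    crossing hconn a hac q hadj hdn 0 j (by omega) (by omega) hxa hxj
  refine no_repeat q hd (show s1 < q.length by omega) (show k - 1 < q.length by omega)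
    (by omega) hp1 ?_
  rw [ek, hx1]

include hconn hac in
lemma parity_getVert {a b : V} (q : G.Walk a b) :
    ∀ i, i ≤ q.length → G.dist a (q.getVert i) % 2 = i % 2 := by
  intro i
  induction i with
  | zero => intro _; simp [SimpleGraph.dist_self]
  | succ i ih =>
    intro h
    have h1 := dist_adj_cases hconn a hac (q.adj_getVert_succ (show i < q.length by omega))
    have h2 := ih (by omega)
    omega

include hconn hac in
/-- the pair lemma: position `i` cannot have a later occurrence while `i+1` has an
earlier occurrence. -/
lemma pair {a b : V} (q : G.Walk a b) (hd : q.darts.Nodup) {i : ℕ}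
    (hil : i + 1 ≤ q.length)
    (h1 : ∃ m, m ≤ q.length ∧ i < m ∧ q.getVert m = q.getVert i)
    (h2 : ∃ j, j < i + 1 ∧ q.getVert j = q.getVert (i + 1)) : False := by
  obtain ⟨m, hm, him, hocc⟩ := h1
  obtain ⟨j, hj, hocc'⟩ := h2
  rcases dist_adj_cases hconn a hac (q.adj_getVert_succ (show i < q.length by omega))
    with hca | hca
  · exact F1 hconn hac q hd hj hil hocc' (by simpa using hca.symm)
  · exact F2 hconn hac q hd him hm hocc hca.symm

end Walklemmas

end ContourSel

theorem contour_selection (n : ℕ) (hn : 2 ≤ n) (G : SimpleGraph (Fin n))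
    (hconn : G.Connected) (hac : G.IsAcyclic) (u v : Fin n) (w : G.Walk u v)
    (hlen : w.length = 2 * n - 3) (hdarts : w.darts.Nodup)
    (hsupp : ∀ x : Fin n, x ∈ w.support) :
    ∃ s : Fin n → Fin (w.length + 1),
      StrictMono s ∧
      Function.Bijective (fun k : Fin n => w.getVert (s k : ℕ)) ∧
      ∀ i : ℕ, (h : i + 1 < n) →
        ((s ⟨i + 1, h⟩ : ℕ) - (s ⟨i, by omega⟩ : ℕ)) ≤ 3 := by
  classical
  set L := w.length with hL
  -- the selection rule: first occurrence at even positions, last occurrence at odd ones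
  set C : ℕ → Prop := fun i => i ≤ L ∧
      ((i % 2 = 0 ∧ ∀ j, j < i → w.getVert j ≠ w.getVert i) ∨
       (i % 2 = 1 ∧ ∀ j, j ≤ L → i < j → w.getVert j ≠ w.getVert i)) with hC
  -- occurrences of a common vertex have a common parity
  have hoccpar : ∀ i j, i ≤ L → j ≤ L → w.getVert i = w.getVert j → i % 2 = j % 2 := by
    intro i j hi hj he
    have h1 := ContourSel.parity_getVert hconn hac w i hi
    have h2 := ContourSel.parity_getVert hconn hac w j hj
    rw [he] at h1
    omega
  -- an odd unchosen position has a later occurrence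
  have hC1 : ∀ i, i % 2 = 1 → i ≤ L → ¬ C i →
      ∃ m, m ≤ L ∧ i < m ∧ w.getVert m = w.getVert i := by
    intro i hi hiL hnc
    by_contra hcon
    push_neg at hcon
    exact hnc ⟨hiL, Or.inr ⟨hi, fun j hj hij he => hcon j hj hij he⟩⟩
  -- an even unchosen position has an earlier occurrence
  have hC0 : ∀ i, i % 2 = 0 → i ≤ L → ¬ C i →
      ∃ j, j < i ∧ w.getVert j = w.getVert i := by
    intro i hi hiL hnc
    by_contra hcon
    push_neg at hcon
    exact hnc ⟨hiL, Or.inl ⟨hi, fun j hj he => hcon j hj he⟩⟩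
  -- among an odd position and its successor, one is chosen
  have hpairodd : ∀ i, i % 2 = 1 → i + 1 ≤ L → C i ∨ C (i + 1) := by
    intro i hi hil
    by_contra hcon
    push_neg at hcon
    obtain ⟨h1, h2⟩ := hcon
    exact ContourSel.pair hconn hac w hdarts hil
      (hC1 i hi (by omega) h1)
      (by
        obtain ⟨j, hj, he⟩ := hC0 (i + 1) (by omega) hil h2
        exact ⟨j, hj, he⟩)
  -- chosen positions have distinct projections
  have hinj : ∀ i j, C i → C j → w.getVert i = w.getVert j → i = j := by
    have key : ∀ i j, i < j → C i → C j → w.getVert i = w.getVert j → False := by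
      intro i j hij hci hcj he
      have hpij := hoccpar i j hci.1 hcj.1 he
      rcases hcj.2 with ⟨hj0, hfirst⟩ | ⟨hj1, hlast⟩
      · exact hfirst i hij he
      · rcases hci.2 with ⟨hi0, -⟩ | ⟨hi1, hlasti⟩
        · omega
        · exact hlasti j hcj.1 hij he.symm
    intro i j hci hcj he
    rcases lt_trichotomy i j with h | h | h
    · exact absurd (key i j h hci hcj he) (by simp)
    · exact h
    · exact absurd (key j i h hcj hci he.symm) (by simp)
  -- every vertex is the projection of some chosen position
  have hsurjC : ∀ x : Fin n, ∃ i, C i ∧ w.getVert i = x := by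
    intro x
    obtain ⟨n0, hge, hle⟩ := SimpleGraph.Walk.mem_support_iff_exists_getVert.mp (hsupp x)
    have hPd : DecidablePred (fun m => m ≤ L ∧ w.getVert m = x) := Classical.decPred _
    have hPex : ∃ m, m ≤ L ∧ w.getVert m = x := ⟨n0, hle, hge⟩
    by_cases hpar : n0 % 2 = 0
    · -- even: take the first occurrence
      obtain ⟨hi0L, hi0x⟩ := Nat.find_spec hPex
      refine ⟨Nat.find hPex, ⟨hi0L, Or.inl ⟨?_, ?_⟩⟩, hi0x⟩
      · have := hoccpar (Nat.find hPex) n0 hi0L hle (by rw [hi0x, hge])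
        omega
      · intro j hj he
        exact Nat.find_min hPex hj ⟨by omega, by rw [he, hi0x]⟩
    · -- odd: take the last occurrence
      obtain ⟨hi1L, hi1x⟩ := Nat.findGreatest_spec (P := fun m => m ≤ L ∧ w.getVert m = x)
        (m := n0) (n := L) hle ⟨hle, hge⟩
      refine ⟨Nat.findGreatest (fun m => m ≤ L ∧ w.getVert m = x) L,
        ⟨hi1L, Or.inr ⟨?_, ?_⟩⟩, hi1x⟩
      · have := hoccpar (Nat.findGreatest (fun m => m ≤ L ∧ w.getVert m = x) L) n0 hi1L hle
          (by rw [hi1x, hge])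
        omega
      · intro j hjL hij he
        exact Nat.findGreatest_is_greatest (P := fun m => m ≤ L ∧ w.getVert m = x)
          (by omega) hjL ⟨hjL, by rw [he, hi1x]⟩
  -- the chosen set
  set S : Finset (Fin (L + 1)) := Finset.univ.filter (fun i => C i.val) with hS
  have hmemS : ∀ i : Fin (L + 1), i ∈ S ↔ C i.val := by
    intro i; simp [hS]
  have hcard : S.card = n := by
    have himg : S.image (fun i : Fin (L + 1) => w.getVert i.val) = Finset.univ := by
      apply Finset.eq_univ_iff_forall.mpr
      intro x
      obtain ⟨i, hci, hix⟩ := hsurjC x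
      refine Finset.mem_image.mpr ⟨⟨i, by omega⟩, ?_, hix⟩
      exact (hmemS _).mpr (by simpa using hci)
    have hinjon : Set.InjOn (fun i : Fin (L + 1) => w.getVert i.val) S := by
      intro i hi j hj he
      have := hinj i.val j.val ((hmemS i).mp hi) ((hmemS j).mp hj) he
      exact Fin.val_injective this
    have := Finset.card_image_of_injOn hinjon
    rw [himg] at this
    simpa using this.symm
  -- the selection function
  set e := S.orderIsoOfFin hcard with he
  refine ⟨fun k => (e k : Fin (L + 1)), ?_, ?_, ?_⟩
  · exact fun a b hab => e.strictMono hab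
  · have hinj2 : Function.Injective (fun k : Fin n => w.getVert ((e k : Fin (L + 1)) : ℕ)) := by
      intro a b hab
      have h1 : C ((e a : Fin (L + 1)) : ℕ) := (hmemS _).mp (e a).2
      have h2 : C ((e b : Fin (L + 1)) : ℕ) := (hmemS _).mp (e b).2
      have := hinj _ _ h1 h2 hab
      have : (e a : Fin (L + 1)) = (e b : Fin (L + 1)) := Fin.val_injective this
      exact e.injective (Subtype.coe_injective this)
    exact (Finite.injective_iff_bijective).mp hinj2
  · intro i hi
    set a : Fin (L + 1) := (e ⟨i, by omega⟩ : Fin (L + 1)) with ha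
    set b : Fin (L + 1) := (e ⟨i + 1, hi⟩ : Fin (L + 1)) with hb
    show (b : ℕ) - (a : ℕ) ≤ 3
    have hab : (a : ℕ) < (b : ℕ) := by
      have : (⟨i, by omega⟩ : Fin n) < ⟨i + 1, hi⟩ := by simp [Fin.lt_def]
      exact e.strictMono this
    by_contra hgap
    push_neg at hgap
    -- no chosen position lies strictly between a and b
    have hnone : ∀ c : ℕ, (a : ℕ) < c → c < (b : ℕ) → ¬ C c := by
      intro c hac' hcb hcC
      have hcL : c < L + 1 := by
        have : (b : ℕ) < L + 1 := b.isLt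
        omega
      have hcS : (⟨c, hcL⟩ : Fin (L + 1)) ∈ S := (hmemS _).mpr hcC
      set k := e.symm ⟨⟨c, hcL⟩, hcS⟩ with hk
      have hek : (e k : Fin (L + 1)) = ⟨c, hcL⟩ := by
        rw [hk, OrderIso.apply_symm_apply]
      have h1 : (⟨i, by omega⟩ : Fin n) < k := by
        have : a < (e k : Fin (L + 1)) := by rw [hek]; exact Fin.mk_lt_mk.mpr hac' |>.trans_le (le_refl _)
        have := e.lt_iff_lt.mp (Subtype.coe_lt_coe.mp this)
        exact this
      have h2 : k < (⟨i + 1, hi⟩ : Fin n) := by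
        have : (e k : Fin (L + 1)) < b := by rw [hek]; exact Fin.mk_lt_mk.mpr hcb
        have := e.lt_iff_lt.mp (Subtype.coe_lt_coe.mp this)
        exact this
      rw [Fin.lt_def] at h1 h2
      simp at h1 h2
      omega
    -- pick an odd position just after a
    set o := if (a.val + 1) % 2 = 1 then a.val + 1 else a.val + 2 with ho
    have hoodd : o % 2 = 1 := by rw [ho]; split_ifs with h <;> omega
    have hoa : a.val < o ∧ o + 1 ≤ a.val + 3 := by rw [ho]; split_ifs <;> omega
    have hbL : (b : ℕ) ≤ L := by
      have := b.isLt; omega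
    have hoL : o + 1 ≤ L := by omega
    rcases hpairodd o hoodd hoL with hc | hc
    · exact hnone o (by omega) (by omega) hc
    · exact hnone (o + 1) (by omega) (by omega) hc
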